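/- Let 𝒫 be a finite set of two-dimensional polyhedra, let C1 := ⋃_{P∈𝒫} (V_P ∪ L_P), let C2 := {t2 ∈ ℝ : ∃ t1 ∈ ℝ, (t1,t2) ∈ C1}, and let r ∈ ℝ be such that [r−ε, r+ε] ∩ C2 = ∅ for some ε > 0. Then there exists δ > 0 such that for every P ∈ 𝒫 and every c ∈ ℝ: if (c,r) ∈ closure(⟦P⟧), then the width of the slice closure(⟦P⟧) ∩ {(t1,t2) : t1 = c} does not lie in the interval (0, δ]. -/

import Mathlib

open Set

namespace MITLPoly

/-- Relation symbols for linear constraints. -/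
inductive Rel where
  | lt | le | gt | ge

/-- Evaluation of a relation symbol. -/
def Rel.eval : Rel → ℝ → ℝ → Prop
  | .lt, x, y => x < y
  | .le, x, y => x ≤ y
  | .gt, x, y => x > y
  | .ge, x, y => x ≥ y

/-- A linear constraint `a·t1 + b·t2 ⋈ c` on points of the plane. -/
structure LinConstraint where
  a : ℝ
  b : ℝ
  rel : Rel
  c : ℝ

/-- A point satisfies a linear constraint. -/
def LinConstraint.holds (C : LinConstraint) (x : ℝ × ℝ) : Prop :=
  C.rel.eval (C.a * x.1 + C.b * x.2) C.c

/-- A two-dimensional polyhedron: a finite list of linear constraints. -/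
abbrev Polyhedron := List LinConstraint

/-- The solution set `⟦P⟧` of a polyhedron. -/
def sols (P : Polyhedron) : Set (ℝ × ℝ) := {x | ∀ C ∈ P, C.holds x}

/-- `V_P`: the extreme points of the closure of `⟦P⟧`. -/
def VP (P : Polyhedron) : Set (ℝ × ℝ) := Set.extremePoints ℝ (closure (sols P))

/-- `L_P`: points of `⟦P⟧` lying on a one-dimensional face (edge) of `⟦P⟧`
contained in a horizontal line `{(t1, t2) : t2 = c}`. -/
def LP (P : Polyhedron) : Set (ℝ × ℝ) :=
  {x | x ∈ sols P ∧ ∃ F : Set (ℝ × ℝ), IsExtreme ℝ (sols P) F ∧ x ∈ F ∧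
    (∃ c : ℝ, ∀ y ∈ F, y.2 = c) ∧ ¬ F.Subsingleton}

/-- `C1 := ⋃_{P ∈ Ps} (V_P ∪ L_P)`. -/
def C1 (Ps : Set Polyhedron) : Set (ℝ × ℝ) := ⋃ P ∈ Ps, (VP P ∪ LP P)

/-- `C2`: the projection of `C1` on the second coordinate. -/
def C2 (Ps : Set Polyhedron) : Set ℝ := {t2 | ∃ t1, (t1, t2) ∈ C1 Ps}

/-- The width of a set of reals, in `EReal`: `sup J − inf J`, which is `⊥`
for the empty set. -/
noncomputable def eWidth (J : Set ℝ) : EReal :=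
  sSup (Real.toEReal '' J) - sInf (Real.toEReal '' J)

/-! ### Auxiliary definitions and lemmas -/

/-- Normalized first coefficient (so the constraint reads `nra·t1 + nrb·t2 ≤ nrc`). -/
def nra (C : LinConstraint) : ℝ :=
  match C.rel with | .lt => C.a | .le => C.a | .gt => -C.a | .ge => -C.a

def nrb (C : LinConstraint) : ℝ :=
  match C.rel with | .lt => C.b | .le => C.b | .gt => -C.b | .ge => -C.b

def nrc (C : LinConstraint) : ℝ :=
  match C.rel with | .lt => C.c | .le => C.c | .gt => -C.c | .ge => -C.c

/-- The closed relaxation of a polyhedron. -/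
def relaxed (P : Polyhedron) : Set (ℝ × ℝ) :=
  {x | ∀ C ∈ P, nra C * x.1 + nrb C * x.2 ≤ nrc C}

noncomputable def slp (C : LinConstraint) : ℝ := -(nra C) / nrb C
noncomputable def icpt (C : LinConstraint) : ℝ := nrc C / nrb C

lemma holds_relaxed (C : LinConstraint) (x : ℝ × ℝ) (h : C.holds x) :
    nra C * x.1 + nrb C * x.2 ≤ nrc C := by
  cases C with
  | mk a b rel c =>
    cases rel <;> simp [LinConstraint.holds, Rel.eval, nra, nrb, nrc] at h ⊢ <;> nlinarith

lemma sols_subset_relaxed (P : Polyhedron) : sols P ⊆ relaxed P :=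
  fun x hx C hC => holds_relaxed C x (hx C hC)

lemma relaxed_closed (P : Polyhedron) : IsClosed (relaxed P) := by
  have h : relaxed P = ⋂ C ∈ P, {x : ℝ × ℝ | nra C * x.1 + nrb C * x.2 ≤ nrc C} := by
    ext x; simp [relaxed]
  rw [h]
  exact isClosed_biInter fun C _ => isClosed_le (by fun_prop) continuous_const

lemma relaxed_convex (P : Polyhedron) : Convex ℝ (relaxed P) := by
  intro x hx y hy a b ha hb hab
  intro C hC
  have h1 := hx C hC
  have h2 := hy C hC
  simp only [Prod.fst_add, Prod.snd_add, Prod.smul_fst, Prod.smul_snd, smul_eq_mul]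
  have h3 : a * nrc C + b * nrc C = nrc C := by linear_combination nrc C * hab
  nlinarith [mul_le_mul_of_nonneg_left h1 ha, mul_le_mul_of_nonneg_left h2 hb]

lemma holds_combo (C : LinConstraint) (x y : ℝ × ℝ) (hx : C.holds x)
    (hy : nra C * y.1 + nrb C * y.2 ≤ nrc C) (t : ℝ) (ht0 : 0 ≤ t) (ht1 : t < 1) :
    C.holds ((1 - t) • x + t • y) := by
  cases C with
  | mk a b rel c =>
    cases rel <;>
      simp [LinConstraint.holds, Rel.eval, nra, nrb, nrc, Prod.smul_fst, Prod.smul_snd,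
        smul_eq_mul] at hx hy ⊢ <;> nlinarith

lemma closure_sols (P : Polyhedron) (h : (sols P).Nonempty) :
    closure (sols P) = relaxed P := by
  obtain ⟨x, hx⟩ := h
  apply Subset.antisymm
  · exact closure_minimal (sols_subset_relaxed P) (relaxed_closed P)
  · intro y hy
    have key : ∀ t : ℝ, 0 ≤ t → t < 1 → (1 - t) • x + t • y ∈ sols P :=
      fun t ht0 ht1 C hC => holds_combo C x y (hx C hC) (hy C hC) t ht0 ht1
    have h1 : Filter.Tendsto (fun n : ℕ => (((n:ℝ)+1)⁻¹)) Filter.atTop (nhds 0) :=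
      tendsto_one_div_add_atTop_nhds_zero_nat.congr (by intro n; rw [one_div])
    have h2 : Filter.Tendsto (fun n : ℕ => (((n:ℝ)+1)⁻¹) • x + (1 - ((n:ℝ)+1)⁻¹) • y)
        Filter.atTop (nhds y) := by
      have := ((h1.smul_const x).add (((tendsto_const_nhds (x := (1:ℝ))).sub h1).smul_const y))
      simpa using this
    refine mem_closure_of_tendsto h2 (Filter.Eventually.of_forall fun n => ?_)
    have hpos : (0:ℝ) < ((n:ℝ)+1)⁻¹ := by positivity
    have hle : ((n:ℝ)+1)⁻¹ ≤ 1 := by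
      rw [inv_le_one_iff₀]; right; linarith [Nat.cast_nonneg (α := ℝ) n]
    have := key (1 - ((n:ℝ)+1)⁻¹) (by linarith) (by linarith)
    simpa using this

lemma upper_bound {P : Polyhedron} {C : LinConstraint} (hC : C ∈ P) (hb : 0 < nrb C)
    {z : ℝ × ℝ} (hz : z ∈ relaxed P) : z.2 ≤ slp C * z.1 + icpt C := by
  have h := hz C hC
  have key : slp C * z.1 + icpt C = (nrc C - nra C * z.1) / nrb C := by
    unfold slp icpt
    field_simp [hb.ne']
    ring
  rw [key, le_div_iff₀ hb]
  linarith

lemma lower_bound {P : Polyhedron} {C : LinConstraint} (hC : C ∈ P) (hb : nrb C < 0)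
    {z : ℝ × ℝ} (hz : z ∈ relaxed P) : slp C * z.1 + icpt C ≤ z.2 := by
  have h := hz C hC
  have key : slp C * z.1 + icpt C = (nrc C - nra C * z.1) / nrb C := by
    unfold slp icpt
    field_simp [hb.ne]
    ring
  rw [key, div_le_iff_of_neg hb]
  linarith

lemma combo_eq_of_le {a b p q c : ℝ} (ha : 0 < a) (hb : 0 < b) (hab : a + b = 1)
    (hp : p ≤ c) (hq : q ≤ c) (h : a * p + b * q = c) : p = c ∧ q = c := by
  have e : a * (p - c) + b * (q - c) = 0 := by linear_combination h - c * hab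
  have t1 : a * (p - c) ≤ 0 := mul_nonpos_of_nonneg_of_nonpos ha.le (by linarith)
  have t2 : b * (q - c) ≤ 0 := mul_nonpos_of_nonneg_of_nonpos hb.le (by linarith)
  have e1 : a * (p - c) = 0 := by linarith
  have e2 : b * (q - c) = 0 := by linarith
  constructor
  · rcases mul_eq_zero.1 e1 with h' | h'
    · exact absurd h' ha.ne'
    · linarith
  · rcases mul_eq_zero.1 e2 with h' | h'
    · exact absurd h' hb.ne'
    · linarith

lemma extreme_of_side (Q : Set (ℝ × ℝ)) (σ c₁ M₁ : ℝ) (hσ : σ ≠ 0)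
    (hside : ∀ z ∈ Q, σ * z.1 ≤ σ * c₁) (htop : ∀ t : ℝ, (c₁, t) ∈ Q → t ≤ M₁)
    (hM : (c₁, M₁) ∈ Q) : (c₁, M₁) ∈ Set.extremePoints ℝ Q := by
  refine ⟨hM, fun x₁ hx₁ x₂ hx₂ hseg => ?_⟩
  obtain ⟨a, b, ha, hb, hab, heq⟩ := hseg
  have h1 : a * x₁.1 + b * x₂.1 = c₁ := congrArg Prod.fst heq
  have h2 : a * x₁.2 + b * x₂.2 = M₁ := congrArg Prod.snd heq
  have hfst : σ * x₁.1 = σ * c₁ ∧ σ * x₂.1 = σ * c₁ := by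
    refine combo_eq_of_le ha hb hab (hside x₁ hx₁) (hside x₂ hx₂) ?_
    linear_combination σ * h1
  have e1 : x₁.1 = c₁ := mul_left_cancel₀ hσ hfst.1
  have e2 : x₂.1 = c₁ := mul_left_cancel₀ hσ hfst.2
  have t1 : x₁.2 ≤ M₁ := htop x₁.2 (by rw [← e1]; exact hx₁)
  have t2 : x₂.2 ≤ M₁ := htop x₂.2 (by rw [← e2]; exact hx₂)
  have hsnd := combo_eq_of_le ha hb hab t1 t2 h2
  exact Prod.ext e1 hsnd.1

lemma interp (Q : Set (ℝ × ℝ)) (hQ : Convex ℝ Q) (p q : ℝ × ℝ) (hp : p ∈ Q) (hq : q ∈ Q)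
    (hne : p.1 ≠ q.1) (c : ℝ) (hc1 : min p.1 q.1 ≤ c) (hc2 : c ≤ max p.1 q.1) :
    (c, p.2 + (c - p.1) / (q.1 - p.1) * (q.2 - p.2)) ∈ Q := by
  set lam : ℝ := (c - p.1) / (q.1 - p.1) with hlam
  have hd : q.1 - p.1 ≠ 0 := sub_ne_zero.mpr (Ne.symm hne)
  have hlam01 : 0 ≤ lam ∧ lam ≤ 1 := by
    rcases lt_or_gt_of_ne hne with h | h
    · have h1 : p.1 ≤ c := by simpa [min_eq_left h.le] using hc1
      have h2 : c ≤ q.1 := by simpa [max_eq_right h.le] using hc2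
      constructor
      · apply div_nonneg <;> linarith
      · rw [div_le_one (by linarith)]; linarith
    · have h1 : q.1 ≤ c := by simpa [min_eq_right h.le] using hc1
      have h2 : c ≤ p.1 := by simpa [max_eq_left h.le] using hc2
      have hrw : lam = (p.1 - c) / (p.1 - q.1) := by
        rw [hlam, ← neg_div_neg_eq]; ring_nf
      rw [hrw]
      constructor
      · apply div_nonneg <;> linarith
      · rw [div_le_one (by linarith)]; linarith
  have hmem := hQ hp hq (by linarith [hlam01.1, hlam01.2] : (0:ℝ) ≤ 1 - lam) hlam01.1 (by ring)
  have heq : (1 - lam) • p + lam • q = (c, p.2 + lam * (q.2 - p.2)) := by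
    have hc : (1 - lam) * p.1 + lam * q.1 = c := by
      rw [hlam]
      field_simp
      ring
    ext
    · simpa using hc
    · simp; ring
  rwa [heq] at hmem

lemma singleton_slice_extreme (Q : Set (ℝ × ℝ)) (hQ : Convex ℝ Q) (cs t₁ c₀ M m : ℝ)
    (hsing : ∀ t : ℝ, (cs, t) ∈ Q → t = t₁) (ht₁ : (cs, t₁) ∈ Q)
    (hu : (c₀, M) ∈ Q) (hv : (c₀, m) ∈ Q) (hMm : M ≠ m) :
    (cs, t₁) ∈ Set.extremePoints ℝ Q := by
  refine ⟨ht₁, fun x₁ hx₁ x₂ hx₂ hseg => ?_⟩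
  obtain ⟨a, b, ha, hb, hab, heq⟩ := hseg
  have h1 : a * x₁.1 + b * x₂.1 = cs := congrArg Prod.fst heq
  have keyA : cs - x₁.1 = b * (x₂.1 - x₁.1) := by linear_combination x₁.1 * hab - h1
  have keyB : cs - x₂.1 = a * (x₁.1 - x₂.1) := by linear_combination x₂.1 * hab - h1
  by_cases hx : x₁.1 = x₂.1
  · have e1 : x₁.1 = cs := by rw [hx] at keyA; simp at keyA; linarith
    have e2 : x₂.1 = cs := by rw [← hx]; exact e1
    have s1 : x₁.2 = t₁ := hsing x₁.2 (by rw [← e1]; exact hx₁)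
    have s2 : x₂.2 = t₁ := hsing x₂.2 (by rw [← e2]; exact hx₂)
    exact Prod.ext e1 s1
  · exfalso
    have hsides : (x₁.1 < cs ∧ cs < x₂.1) ∨ (x₂.1 < cs ∧ cs < x₁.1) := by
      rcases lt_or_gt_of_ne hx with h | h
      · exact Or.inl ⟨by nlinarith [mul_pos hb (sub_pos.mpr h)],
          by nlinarith [mul_pos ha (sub_pos.mpr h)]⟩
      · exact Or.inr ⟨by nlinarith [mul_pos ha (sub_pos.mpr h)],
          by nlinarith [mul_pos hb (sub_pos.mpr h)]⟩
    have hz : ∃ z ∈ Q, (z.1 < cs ∧ cs ≤ c₀) ∨ (cs < z.1 ∧ c₀ ≤ cs) := by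
      rcases le_total cs c₀ with hcc | hcc
      · rcases hsides with ⟨h1', _⟩ | ⟨h1', _⟩
        · exact ⟨x₁, hx₁, Or.inl ⟨h1', hcc⟩⟩
        · exact ⟨x₂, hx₂, Or.inl ⟨h1', hcc⟩⟩
      · rcases hsides with ⟨_, h2'⟩ | ⟨_, h2'⟩
        · exact ⟨x₂, hx₂, Or.inr ⟨h2', hcc⟩⟩
        · exact ⟨x₁, hx₁, Or.inr ⟨h2', hcc⟩⟩
    obtain ⟨z, hzQ, hzcase⟩ := hz
    have hzc₀ : z.1 ≠ c₀ := by
      rcases hzcase with ⟨h1', h2'⟩ | ⟨h1', h2'⟩ <;> intro h <;> rw [h] at h1' <;> linarith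
    have hmin : min z.1 (c₀, M).1 ≤ cs := by
      rcases hzcase with ⟨h1', _⟩ | ⟨_, h2'⟩
      · exact (min_le_left _ _).trans h1'.le
      · exact (min_le_right _ _).trans h2'
    have hmax : cs ≤ max z.1 (c₀, M).1 := by
      rcases hzcase with ⟨_, h2'⟩ | ⟨h1', _⟩
      · exact h2'.trans (le_max_right _ _)
      · exact h1'.le.trans (le_max_left _ _)
    have hM' := interp Q hQ z (c₀, M) hzQ hu hzc₀ cs hmin hmax
    have hm' := interp Q hQ z (c₀, m) hzQ hv hzc₀ cs hmin hmax
    have eM := hsing _ hM'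
    have em := hsing _ hm'
    have hlam : (cs - z.1) / (c₀ - z.1) ≠ 0 := by
      apply div_ne_zero
      · rcases hzcase with ⟨h1', _⟩ | ⟨h1', _⟩ <;> intro h <;> nlinarith
      · intro h; exact hzc₀ (by linarith)
    apply hMm
    have h' : (cs - z.1) / (c₀ - z.1) * (M - z.2) = (cs - z.1) / (c₀ - z.1) * (m - z.2) := by
      simp only at eM em; linarith
    have := mul_left_cancel₀ hlam h'
    linarith

lemma affine_bound {α β a b c : ℝ} (h1 : a ≤ c) (h2 : c ≤ b) :
    min (α*a+β) (α*b+β) ≤ α*c+β ∧ α*c+β ≤ max (α*a+β) (α*b+β) := by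
  rcases le_total 0 α with hα | hα
  · exact ⟨min_le_iff.mpr (Or.inl (by nlinarith)), le_max_iff.mpr (Or.inr (by nlinarith))⟩
  · exact ⟨min_le_iff.mpr (Or.inr (by nlinarith)), le_max_iff.mpr (Or.inl (by nlinarith))⟩

lemma core_le (Q : Set (ℝ × ℝ)) (hconv : Convex ℝ Q) (hcl : IsClosed Q)
    (αU βU αL βL c₀ cs : ℝ)
    (hU : ∀ z ∈ Q, z.2 ≤ αU * z.1 + βU) (hL : ∀ z ∈ Q, αL * z.1 + βL ≤ z.2)
    (hM : (c₀, αU * c₀ + βU) ∈ Q) (hm : (c₀, αL * c₀ + βL) ∈ Q)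
    (hw : αL * c₀ + βL < αU * c₀ + βU)
    (hdir : c₀ ≤ cs) (hroot : αU * cs + βU = αL * cs + βL) :
    ∃ c₁ ∈ Icc c₀ cs, ∃ y₂ : ℝ, (c₁, y₂) ∈ Set.extremePoints ℝ Q ∧
      αL * c₁ + βL ≤ y₂ ∧ y₂ ≤ αU * c₁ + βU := by
  set lo := min (αL*c₀+βL) (αL*cs+βL) with hlo
  set hi := max (αU*c₀+βU) (αU*cs+βU) with hhi
  have hbox : ∀ z ∈ Q, z.1 ∈ Icc c₀ cs → z ∈ (Icc c₀ cs ×ˢ Icc lo hi) ∩ Q := by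
    intro z hz hz1
    refine ⟨⟨hz1, ?_, ?_⟩, hz⟩
    · exact le_trans (affine_bound hz1.1 hz1.2).1 (hL z hz)
    · exact le_trans (hU z hz) (affine_bound hz1.1 hz1.2).2
  have hQK : IsCompact ((Icc c₀ cs ×ˢ Icc lo hi) ∩ Q) :=
    (isCompact_Icc.prod isCompact_Icc).inter_right hcl
  have hMbox : (c₀, αU * c₀ + βU) ∈ (Icc c₀ cs ×ˢ Icc lo hi) ∩ Q :=
    hbox _ hM ⟨le_refl _, hdir⟩
  set pr := Prod.fst '' ((Icc c₀ cs ×ˢ Icc lo hi) ∩ Q) with hpr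
  have hprcomp : IsCompact pr := hQK.image continuous_fst
  have hprne : pr.Nonempty := ⟨c₀, _, hMbox, rfl⟩
  set c₁ := sSup pr with hc₁
  have hc₁pr : c₁ ∈ pr := hprcomp.sSup_mem hprne
  obtain ⟨z₁, hz₁QK, hz₁⟩ := hc₁pr
  have hc₁Icc : c₁ ∈ Icc c₀ cs := hz₁ ▸ hz₁QK.1.1
  have ht₁Q : (c₁, z₁.2) ∈ Q := by
    have h' : z₁ = (c₁, z₁.2) := Prod.ext hz₁ rfl
    rw [← h']; exact hz₁QK.2
  rcases eq_or_lt_of_le hc₁Icc.2 with hceq | hclt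
  · have hsing : ∀ t : ℝ, (cs, t) ∈ Q → t = αU * cs + βU := by
      intro t ht
      have h1 := hU (cs, t) ht
      have h2 := hL (cs, t) ht
      simp only at h1 h2
      linarith [hroot]
    have htQ : (cs, αU * cs + βU) ∈ Q := by
      have := hsing z₁.2 (by rw [← hceq]; exact ht₁Q)
      rw [← this, ← hceq]; exact ht₁Q
    refine ⟨cs, ⟨hdir, le_refl _⟩, αU * cs + βU, ?_, le_of_eq hroot.symm, le_refl _⟩
    exact singleton_slice_extreme Q hconv cs _ c₀ _ _ hsing htQ hM hm (ne_of_gt hw)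
  · have hside : ∀ z ∈ Q, z.1 ≤ c₁ := by
      intro z hz
      by_contra hgt
      push_neg at hgt
      rcases le_or_gt z.1 cs with hzcs | hzcs
      · have hin : z.1 ∈ pr := ⟨z, hbox z hz ⟨le_trans hc₁Icc.1 hgt.le, hzcs⟩, rfl⟩
        exact absurd (le_csSup hprcomp.bddAbove hin) (not_le.mpr hgt)
      · have hne : (c₀, αU * c₀ + βU).1 ≠ z.1 := by
          simp only; intro h; rw [← h] at hzcs; linarith
        have hmem := interp Q hconv (c₀, αU * c₀ + βU) z hM hz hne cs
          ((min_le_left _ _).trans hdir) (le_trans hzcs.le (le_max_right _ _))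
        have hin : cs ∈ pr := ⟨_, hbox _ hmem ⟨hdir, le_refl _⟩, rfl⟩
        exact absurd (le_csSup hprcomp.bddAbove hin) (not_le.mpr hclt)
    set S := {t : ℝ | (c₁, t) ∈ Q} with hS
    have hSne : S.Nonempty := ⟨z₁.2, ht₁Q⟩
    have hSbdd : BddAbove S := ⟨αU * c₁ + βU, fun t ht => hU (c₁, t) ht⟩
    have hSclosed : IsClosed S := hcl.preimage (Continuous.prodMk_right c₁)
    set M₁ := sSup S with hM₁
    have hM₁S : M₁ ∈ S := hSclosed.csSup_mem hSne hSbdd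
    have hext := extreme_of_side Q 1 c₁ M₁ one_ne_zero
      (fun z hz => by simpa using hside z hz) (fun t ht => le_csSup hSbdd ht) hM₁S
    exact ⟨c₁, hc₁Icc, M₁, hext, hL _ hM₁S, hU _ hM₁S⟩

lemma core_ge (Q : Set (ℝ × ℝ)) (hconv : Convex ℝ Q) (hcl : IsClosed Q)
    (αU βU αL βL c₀ cs : ℝ)
    (hU : ∀ z ∈ Q, z.2 ≤ αU * z.1 + βU) (hL : ∀ z ∈ Q, αL * z.1 + βL ≤ z.2)
    (hM : (c₀, αU * c₀ + βU) ∈ Q) (hm : (c₀, αL * c₀ + βL) ∈ Q)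
    (hw : αL * c₀ + βL < αU * c₀ + βU)
    (hdir : cs ≤ c₀) (hroot : αU * cs + βU = αL * cs + βL) :
    ∃ c₁ ∈ Icc cs c₀, ∃ y₂ : ℝ, (c₁, y₂) ∈ Set.extremePoints ℝ Q ∧
      αL * c₁ + βL ≤ y₂ ∧ y₂ ≤ αU * c₁ + βU := by
  set lo := min (αL*cs+βL) (αL*c₀+βL) with hlo
  set hi := max (αU*cs+βU) (αU*c₀+βU) with hhi
  have hbox : ∀ z ∈ Q, z.1 ∈ Icc cs c₀ → z ∈ (Icc cs c₀ ×ˢ Icc lo hi) ∩ Q := by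
    intro z hz hz1
    refine ⟨⟨hz1, ?_, ?_⟩, hz⟩
    · exact le_trans (affine_bound hz1.1 hz1.2).1 (hL z hz)
    · exact le_trans (hU z hz) (affine_bound hz1.1 hz1.2).2
  have hQK : IsCompact ((Icc cs c₀ ×ˢ Icc lo hi) ∩ Q) :=
    (isCompact_Icc.prod isCompact_Icc).inter_right hcl
  have hMbox : (c₀, αU * c₀ + βU) ∈ (Icc cs c₀ ×ˢ Icc lo hi) ∩ Q :=
    hbox _ hM ⟨hdir, le_refl _⟩
  set pr := Prod.fst '' ((Icc cs c₀ ×ˢ Icc lo hi) ∩ Q) with hpr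
  have hprcomp : IsCompact pr := hQK.image continuous_fst
  have hprne : pr.Nonempty := ⟨c₀, _, hMbox, rfl⟩
  set c₁ := sInf pr with hc₁
  have hc₁pr : c₁ ∈ pr := hprcomp.sInf_mem hprne
  obtain ⟨z₁, hz₁QK, hz₁⟩ := hc₁pr
  have hc₁Icc : c₁ ∈ Icc cs c₀ := hz₁ ▸ hz₁QK.1.1
  have ht₁Q : (c₁, z₁.2) ∈ Q := by
    have h' : z₁ = (c₁, z₁.2) := Prod.ext hz₁ rfl
    rw [← h']; exact hz₁QK.2
  rcases eq_or_lt_of_le hc₁Icc.1 with hceq | hclt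
  · have hsing : ∀ t : ℝ, (cs, t) ∈ Q → t = αU * cs + βU := by
      intro t ht
      have h1 := hU (cs, t) ht
      have h2 := hL (cs, t) ht
      simp only at h1 h2
      linarith [hroot]
    have htQ : (cs, αU * cs + βU) ∈ Q := by
      have := hsing z₁.2 (by rw [hceq]; exact ht₁Q)
      rw [← this, hceq]; exact ht₁Q
    refine ⟨cs, ⟨le_refl _, hdir⟩, αU * cs + βU, ?_, le_of_eq hroot.symm, le_refl _⟩
    exact singleton_slice_extreme Q hconv cs _ c₀ _ _ hsing htQ hM hm (ne_of_gt hw)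
  · have hside : ∀ z ∈ Q, c₁ ≤ z.1 := by
      intro z hz
      by_contra hgt
      push_neg at hgt
      rcases le_or_gt cs z.1 with hzcs | hzcs
      · have hin : z.1 ∈ pr := ⟨z, hbox z hz ⟨hzcs, le_trans hgt.le hc₁Icc.2⟩, rfl⟩
        exact absurd (csInf_le hprcomp.bddBelow hin) (not_le.mpr hgt)
      · have hne : (c₀, αU * c₀ + βU).1 ≠ z.1 := by
          simp only; intro h; rw [← h] at hzcs; linarith
        have hmem := interp Q hconv (c₀, αU * c₀ + βU) z hM hz hne cs
          (le_trans (min_le_right _ _) hzcs.le) (hdir.trans (le_max_left _ _))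
        have hin : cs ∈ pr := ⟨_, hbox _ hmem ⟨le_refl _, hdir⟩, rfl⟩
        exact absurd (csInf_le hprcomp.bddBelow hin) (not_le.mpr hclt)
    set S := {t : ℝ | (c₁, t) ∈ Q} with hS
    have hSne : S.Nonempty := ⟨z₁.2, ht₁Q⟩
    have hSbdd : BddAbove S := ⟨αU * c₁ + βU, fun t ht => hU (c₁, t) ht⟩
    have hSclosed : IsClosed S := hcl.preimage (Continuous.prodMk_right c₁)
    set M₁ := sSup S with hM₁
    have hM₁S : M₁ ∈ S := hSclosed.csSup_mem hSne hSbdd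
    have hext := extreme_of_side Q (-1) c₁ M₁ (by norm_num)
      (fun z hz => by simpa using hside z hz) (fun t ht => le_csSup hSbdd ht) hM₁S
    exact ⟨c₁, hc₁Icc, M₁, hext, hL _ hM₁S, hU _ hM₁S⟩

lemma eWidth_Icc {m M : ℝ} (h : m ≤ M) : eWidth (Icc m M) = ((M - m : ℝ) : EReal) := by
  have hsup : sSup (Real.toEReal '' Icc m M) = (M : EReal) := by
    apply le_antisymm
    · exact sSup_le (by rintro x ⟨t, ht, rfl⟩; exact EReal.coe_le_coe_iff.mpr ht.2)
    · exact le_sSup ⟨M, ⟨h, le_refl _⟩, rfl⟩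
  have hinf : sInf (Real.toEReal '' Icc m M) = (m : EReal) := by
    apply le_antisymm
    · exact sInf_le ⟨m, ⟨le_refl _, h⟩, rfl⟩
    · exact le_sInf (by rintro x ⟨t, ht, rfl⟩; exact EReal.coe_le_coe_iff.mpr ht.1)
  rw [eWidth, hsup, hinf, ← EReal.coe_sub]

lemma eWidth_top_of_upray {J : Set ℝ} (r : ℝ) (h : Ici r ⊆ J) : eWidth J = ⊤ := by
  have hsup : sSup (Real.toEReal '' J) = ⊤ := by
    rw [sSup_eq_top]
    intro b hb
    obtain ⟨y, hy⟩ : ∃ y : ℝ, b < (y : EReal) := by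
      induction b with
      | bot => exact ⟨0, bot_lt_iff_ne_bot.mpr (by simp)⟩
      | coe x => exact ⟨x + 1, by exact_mod_cast lt_add_one x⟩
      | top => exact absurd hb (lt_irrefl _)
    exact ⟨(max y r : ℝ), ⟨max y r, h (mem_Ici.mpr (le_max_right _ _)), rfl⟩,
      hy.trans_le (EReal.coe_le_coe_iff.mpr (le_max_left _ _))⟩
  have hinf : sInf (Real.toEReal '' J) ≤ (r : EReal) := sInf_le ⟨r, h self_mem_Ici, rfl⟩
  rw [eWidth, hsup, sub_eq_add_neg]
  apply EReal.top_add_of_ne_bot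
  rw [Ne, EReal.neg_eq_bot_iff]
  exact (hinf.trans_lt (EReal.coe_lt_top r)).ne

lemma eWidth_top_of_downray {J : Set ℝ} (r : ℝ) (h : Iic r ⊆ J) : eWidth J = ⊤ := by
  have hinf : sInf (Real.toEReal '' J) = ⊥ := by
    rw [sInf_eq_bot]
    intro b hb
    obtain ⟨y, hy⟩ : ∃ y : ℝ, (y : EReal) < b := by
      induction b with
      | bot => exact absurd hb (lt_irrefl _)
      | coe x => exact ⟨x - 1, by exact_mod_cast sub_one_lt x⟩
      | top => exact ⟨0, EReal.coe_lt_top 0⟩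
    exact ⟨(min y r : ℝ), ⟨min y r, h (mem_Iic.mpr (min_le_right _ _)), rfl⟩,
      (EReal.coe_le_coe_iff.mpr (min_le_left _ _)).trans_lt hy⟩
  have hsup : (r : EReal) ≤ sSup (Real.toEReal '' J) := le_sSup ⟨r, h self_mem_Iic, rfl⟩
  rw [eWidth, hinf, sub_eq_add_neg, EReal.neg_bot]
  apply EReal.add_top_of_ne_bot
  intro hc
  rw [hc] at hsup
  exact absurd hsup (by simp)

lemma top_notin_Ioc (δ : ℝ) : (⊤ : EReal) ∉ Set.Ioc (0 : EReal) (δ : EReal) := by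
  intro h
  exact absurd h.2 (EReal.coe_lt_top δ).not_ge

lemma exists_pos_lb {X : Set ℝ} (hX : X.Finite) : ∃ δ : ℝ, 0 < δ ∧ ∀ x ∈ X, 0 < x → δ < x := by
  classical
  set F := hX.toFinset.filter (fun x => 0 < x) with hF
  by_cases hFne : F.Nonempty
  · have hmin := Finset.mem_filter.mp (F.min'_mem hFne)
    refine ⟨F.min' hFne / 2, by linarith [hmin.2], ?_⟩
    intro x hx hxpos
    have hxF : x ∈ F := Finset.mem_filter.mpr ⟨hX.mem_toFinset.mpr hx, hxpos⟩
    have h1 := F.min'_le x hxF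
    linarith [hmin.2]
  · refine ⟨1, one_pos, fun x hx hxpos => ?_⟩
    exact absurd ⟨x, Finset.mem_filter.mpr ⟨hX.mem_toFinset.mpr hx, hxpos⟩⟩ hFne

/-- The main per-polyhedron lemma. -/
lemma perP (P : Polyhedron) (r ε : ℝ) (hε : 0 < ε)
    (hVP : ∀ y ∈ Set.extremePoints ℝ (closure (sols P)), y.2 ∉ Set.Icc (r - ε) (r + ε)) :
    ∃ δ : ℝ, 0 < δ ∧ ∀ c : ℝ, (c, r) ∈ closure (sols P) →
      eWidth {t2 | (c, t2) ∈ closure (sols P)} ∉ Set.Ioc (0 : EReal) (δ : EReal) := by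
  by_cases hne : (sols P).Nonempty
  swap
  · refine ⟨1, one_pos, fun c hc => ?_⟩
    rw [not_nonempty_iff_eq_empty.mp hne, closure_empty] at hc
    exact absurd hc (notMem_empty _)
  have hQ : closure (sols P) = relaxed P := closure_sols P hne
  -- the finite set of critical values
  set val : LinConstraint × LinConstraint → ℝ := fun ij =>
    if slp ij.1 = slp ij.2 then icpt ij.1 - icpt ij.2
    else ε / (1 + (|slp ij.1| + |slp ij.2|) / |slp ij.1 - slp ij.2|) with hval
  have hXfin : (val '' {ij | ij.1 ∈ P ∧ ij.2 ∈ P}).Finite := by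
    apply Set.Finite.image
    have : {ij : LinConstraint × LinConstraint | ij.1 ∈ P ∧ ij.2 ∈ P} =
        {C | C ∈ P} ×ˢ {C | C ∈ P} := by ext ij; simp [Set.mem_prod]
    rw [this]
    exact (P.finite_toSet).prod (P.finite_toSet)
  obtain ⟨δ, hδpos, hδ⟩ := exists_pos_lb hXfin
  refine ⟨δ, hδpos, fun c hcr hIoc => ?_⟩
  rw [hQ] at hcr hIoc
  by_cases hUp : ∃ C ∈ P, 0 < nrb C
  swap
  · -- no upper constraints: width is ⊤
    push_neg at hUp
    have hray : Ici r ⊆ {t2 | (c, t2) ∈ relaxed P} := by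
      intro t ht C hC
      have h0 := hcr C hC
      have hb : nrb C ≤ 0 := hUp C hC
      simp only
      nlinarith [mul_le_mul_of_nonpos_left (mem_Ici.mp ht) hb]
    rw [eWidth_top_of_upray r hray] at hIoc
    exact top_notin_Ioc δ hIoc
  by_cases hLo : ∃ C ∈ P, nrb C < 0
  swap
  · push_neg at hLo
    have hray : Iic r ⊆ {t2 | (c, t2) ∈ relaxed P} := by
      intro t ht C hC
      have h0 := hcr C hC
      have hb : 0 ≤ nrb C := hLo C hC
      simp only
      nlinarith [mul_le_mul_of_nonneg_left (mem_Iic.mp ht) hb]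
    rw [eWidth_top_of_downray r hray] at hIoc
    exact top_notin_Ioc δ hIoc
  -- main case: both upper and lower constraints exist
  obtain ⟨CUp, hCUp⟩ := hUp
  obtain ⟨CLo, hCLo⟩ := hLo
  obtain ⟨i₀, hi₀, hi₀min⟩ := Set.exists_min_image {C | C ∈ P ∧ 0 < nrb C}
    (fun C => slp C * c + icpt C)
    (P.finite_toSet.subset (fun C hC => hC.1)) ⟨CUp, hCUp.1, hCUp.2⟩
  obtain ⟨j₀, hj₀, hj₀max⟩ := Set.exists_max_image {C | C ∈ P ∧ nrb C < 0}
    (fun C => slp C * c + icpt C)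
    (P.finite_toSet.subset (fun C hC => hC.1)) ⟨CLo, hCLo.1, hCLo.2⟩
  set M := slp i₀ * c + icpt i₀ with hMdef
  set m := slp j₀ * c + icpt j₀ with hmdef
  have hrM : r ≤ M := upper_bound hi₀.1 hi₀.2 hcr
  have hrm : m ≤ r := lower_bound hj₀.1 hj₀.2 hcr
  have hmM : m ≤ M := hrm.trans hrM
  have hslice : {t2 | (c, t2) ∈ relaxed P} = Icc m M := by
    ext t
    constructor
    · intro ht
      exact ⟨lower_bound hj₀.1 hj₀.2 ht, upper_bound hi₀.1 hi₀.2 ht⟩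
    · rintro ⟨h1, h2⟩ C hC
      rcases lt_trichotomy (nrb C) 0 with hb | hb | hb
      · have hle : slp C * c + icpt C ≤ m := hj₀max C ⟨hC, hb⟩
        have key : nrb C * (slp C * c + icpt C) = -(nra C) * c + nrc C := by
          unfold slp icpt
          field_simp [hb.ne]
        nlinarith [mul_le_mul_of_nonpos_left (hle.trans h1) hb.le]
      · have h0 := hcr C hC
        simp only at h0 ⊢
        rw [hb] at h0 ⊢
        linarith
      · have hle : M ≤ slp C * c + icpt C := hi₀min C ⟨hC, hb⟩
        have key : nrb C * (slp C * c + icpt C) = -(nra C) * c + nrc C := by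
          unfold slp icpt
          field_simp [hb.ne']
        nlinarith [mul_le_mul_of_nonneg_left (h2.trans hle) hb.le]
  rw [hslice, eWidth_Icc hmM] at hIoc
  have hw1 : (0:ℝ) < M - m := by exact_mod_cast hIoc.1
  have hw2 : M - m ≤ δ := by exact_mod_cast hIoc.2
  set w := M - m with hwdef
  have hMQ : (c, M) ∈ relaxed P := by
    have h' : M ∈ Icc m M := right_mem_Icc.mpr hmM
    rw [← hslice] at h'; exact h'
  have hmQ : (c, m) ∈ relaxed P := by
    have h' : m ∈ Icc m M := left_mem_Icc.mpr hmM
    rw [← hslice] at h'; exact h'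
  have hUbd : ∀ z ∈ relaxed P, z.2 ≤ slp i₀ * z.1 + icpt i₀ :=
    fun z hz => upper_bound hi₀.1 hi₀.2 hz
  have hLbd : ∀ z ∈ relaxed P, slp j₀ * z.1 + icpt j₀ ≤ z.2 :=
    fun z hz => lower_bound hj₀.1 hj₀.2 hz
  by_cases hB : slp i₀ = slp j₀
  · -- parallel: the width is a fixed constant of the pair, and δ < it
    have hA : val (i₀, j₀) = icpt i₀ - icpt j₀ := if_pos hB
    have hAw : icpt i₀ - icpt j₀ = w := by rw [hwdef, hMdef, hmdef, hB]; ring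
    have := hδ _ ⟨(i₀, j₀), ⟨hi₀.1, hj₀.1⟩, rfl⟩ (by rw [hA, hAw]; exact hw1)
    rw [hA, hAw] at this
    linarith
  · -- non-parallel: find a nearby extreme point
    set B := slp i₀ - slp j₀ with hBdef
    have hBne : B ≠ 0 := sub_ne_zero.mpr hB
    set K := 1 + (|slp i₀| + |slp j₀|) / |B| with hKdef
    have hK1 : (1:ℝ) ≤ K := le_add_of_nonneg_right (by positivity)
    have hKpos : (0:ℝ) < K := lt_of_lt_of_le one_pos hK1
    have hδK : δ * K < ε := by
      have hmem : val (i₀, j₀) = ε / K := if_neg hB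
      have hpos : 0 < ε / K := div_pos hε hKpos
      have := hδ _ ⟨(i₀, j₀), ⟨hi₀.1, hj₀.1⟩, rfl⟩ (by rw [hmem]; exact hpos)
      rw [hmem] at this
      calc δ * K < (ε / K) * K := by exact mul_lt_mul_of_pos_right this hKpos
        _ = ε := by field_simp
    set cs := c - w / B with hcs
    have hwB : w = B * c + (icpt i₀ - icpt j₀) := by
      rw [hwdef, hMdef, hmdef, hBdef]; ring
    have hBw : B * (w / B) = w := by field_simp
    have hroot : slp i₀ * cs + icpt i₀ = slp j₀ * cs + icpt j₀ := by
      rw [hcs]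
      linear_combination (w / B - c) * hBdef - hwB - hBw
    have hcsd : |cs - c| = w / |B| := by
      rw [hcs]
      rw [show c - w / B - c = -(w / B) by ring, abs_neg, abs_div, abs_of_pos hw1]
    clear_value M m w B K cs
    -- distance bound for points between c and cs
    have hkey : ∀ c₁ y₂ : ℝ, |c₁ - c| ≤ |cs - c| →
        slp j₀ * c₁ + icpt j₀ ≤ y₂ → y₂ ≤ slp i₀ * c₁ + icpt i₀ →
        y₂ ∈ Set.Icc (r - ε) (r + ε) := by
      intro c₁ y₂ hd hy1 hy2
      rw [hcsd] at hd
      have hup : slp i₀ * c₁ + icpt i₀ ≤ r + w * K := by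
        have h1 : slp i₀ * c₁ + icpt i₀ = M + slp i₀ * (c₁ - c) := by
          rw [hMdef]; ring
        have h2 : slp i₀ * (c₁ - c) ≤ |slp i₀| * (w / |B|) := by
          calc slp i₀ * (c₁ - c) ≤ |slp i₀ * (c₁ - c)| := le_abs_self _
            _ = |slp i₀| * |c₁ - c| := abs_mul _ _
            _ ≤ |slp i₀| * (w / |B|) := by
              exact mul_le_mul_of_nonneg_left hd (abs_nonneg _)
        have h3 : M ≤ r + w := by rw [hwdef]; linarith
        have h4 : |slp i₀| * (w / |B|) ≤ w * K - w := by
          have hr1 : w * K - w = w * ((|slp i₀| + |slp j₀|) / |B|) := by rw [hKdef]; ring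
          rw [hr1, div_eq_mul_inv, div_eq_mul_inv]
          have hr2 : |slp i₀| * (w * |B|⁻¹) = w * (|slp i₀| * |B|⁻¹) := by ring
          rw [hr2]
          apply mul_le_mul_of_nonneg_left _ hw1.le
          apply mul_le_mul_of_nonneg_right _ (by positivity)
          linarith [abs_nonneg (slp j₀)]
        linarith
      have hdown : r - w * K ≤ slp j₀ * c₁ + icpt j₀ := by
        have h1 : slp j₀ * c₁ + icpt j₀ = m + slp j₀ * (c₁ - c) := by
          rw [hmdef]; ring
        have h2 : -(|slp j₀| * (w / |B|)) ≤ slp j₀ * (c₁ - c) := by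
          calc -(|slp j₀| * (w / |B|)) ≤ -(|slp j₀| * |c₁ - c|) := by
                have := mul_le_mul_of_nonneg_left hd (abs_nonneg (slp j₀))
                linarith
            _ = -|slp j₀ * (c₁ - c)| := by rw [abs_mul]
            _ ≤ slp j₀ * (c₁ - c) := neg_abs_le _
        have h3 : r - w ≤ m := by rw [hwdef]; linarith
        have h4 : |slp j₀| * (w / |B|) ≤ w * K - w := by
          have hr1 : w * K - w = w * ((|slp i₀| + |slp j₀|) / |B|) := by rw [hKdef]; ring
          rw [hr1, div_eq_mul_inv, div_eq_mul_inv]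
          have hr2 : |slp j₀| * (w * |B|⁻¹) = w * (|slp j₀| * |B|⁻¹) := by ring
          rw [hr2]
          apply mul_le_mul_of_nonneg_left _ hw1.le
          apply mul_le_mul_of_nonneg_right _ (by positivity)
          linarith [abs_nonneg (slp i₀)]
        linarith
      have hwK : w * K ≤ δ * K := mul_le_mul_of_nonneg_right hw2 hKpos.le
      constructor
      · linarith
      · linarith
    -- apply the core lemma in the appropriate direction
    rcases le_total c cs with hdir | hdir
    · obtain ⟨c₁, hc₁, y₂, hext, hy1, hy2⟩ := core_le (relaxed P) (relaxed_convex P)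
        (relaxed_closed P) (slp i₀) (icpt i₀) (slp j₀) (icpt j₀) c cs hUbd hLbd
        (by rw [← hMdef]; exact hMQ) (by rw [← hmdef]; exact hmQ) (by rw [← hMdef, ← hmdef]; linarith) hdir hroot
      have hdist : |c₁ - c| ≤ |cs - c| := by
        rw [abs_of_nonneg (by linarith [hc₁.1] : (0:ℝ) ≤ c₁ - c),
          abs_of_nonneg (by linarith : (0:ℝ) ≤ cs - c)]
        linarith [hc₁.2]
      exact absurd (hkey c₁ y₂ hdist hy1 hy2) (hVP (c₁, y₂) (by rw [hQ]; exact hext))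
    · obtain ⟨c₁, hc₁, y₂, hext, hy1, hy2⟩ := core_ge (relaxed P) (relaxed_convex P)
        (relaxed_closed P) (slp i₀) (icpt i₀) (slp j₀) (icpt j₀) c cs hUbd hLbd
        (by rw [← hMdef]; exact hMQ) (by rw [← hmdef]; exact hmQ) (by rw [← hMdef, ← hmdef]; linarith) hdir hroot
      have hdist : |c₁ - c| ≤ |cs - c| := by
        rw [abs_of_nonpos (by linarith [hc₁.2] : c₁ - c ≤ 0),
          abs_of_nonpos (by linarith : cs - c ≤ 0)]
        linarith [hc₁.1]
      exact absurd (hkey c₁ y₂ hdist hy1 hy2) (hVP (c₁, y₂) (by rw [hQ]; exact hext))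

theorem slice_width_dichotomy (Ps : Set Polyhedron) (hfin : Ps.Finite)
    (r ε : ℝ) (hε : 0 < ε) (hr : Set.Icc (r - ε) (r + ε) ∩ C2 Ps = ∅) :
    ∃ δ : ℝ, 0 < δ ∧ ∀ P ∈ Ps, ∀ c : ℝ, (c, r) ∈ closure (sols P) →
      eWidth {t2 | (c, t2) ∈ closure (sols P)} ∉ Set.Ioc (0 : EReal) (δ : EReal) := by
  classical
  -- for each P in Ps, extreme points of closure avoid the band
  have hband : ∀ P ∈ Ps, ∀ y ∈ Set.extremePoints ℝ (closure (sols P)),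
      y.2 ∉ Set.Icc (r - ε) (r + ε) := by
    intro P hP y hy hyIcc
    have hC1 : y ∈ C1 Ps := mem_biUnion hP (Or.inl hy)
    have hC2 : y.2 ∈ C2 Ps := ⟨y.1, by simpa using hC1⟩
    have : y.2 ∈ Set.Icc (r - ε) (r + ε) ∩ C2 Ps := ⟨hyIcc, hC2⟩
    rw [hr] at this
    exact notMem_empty _ this
  -- choose a δ for each polyhedron
  have hchoice : ∀ P : Polyhedron, ∃ δP : ℝ, 0 < δP ∧ (P ∈ Ps →
      ∀ c : ℝ, (c, r) ∈ closure (sols P) →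
      eWidth {t2 | (c, t2) ∈ closure (sols P)} ∉ Set.Ioc (0 : EReal) (δP : EReal)) := by
    intro P
    by_cases hP : P ∈ Ps
    · obtain ⟨δP, hpos, hprop⟩ := perP P r ε hε (hband P hP)
      exact ⟨δP, hpos, fun _ => hprop⟩
    · exact ⟨1, one_pos, fun h => absurd h hP⟩
  choose f hfpos hfprop using hchoice
  obtain ⟨δ, hδpos, hδ⟩ := exists_pos_lb (hfin.image f)
  refine ⟨δ, hδpos, fun P hP c hc hIoc => ?_⟩
  have hlt : δ < f P := hδ (f P) ⟨P, hP, rfl⟩ (hfpos P)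
  apply hfprop P hP c hc
  exact ⟨hIoc.1, hIoc.2.trans (EReal.coe_le_coe_iff.mpr hlt.le)⟩

end MITLPoly
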